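/- arXiv:1002.4754 — 2 statements merged into one kernel-verified Lean document; each statement's English description precedes it below -/
import Mathlib

section
/- Let Γ be a p×p matrix satisfying the decay condition |Γ_{ij}| ≤ M/(1 + |i−j|^{α+1}) with M > 0 and α > 0. Then the banded matrix B_b[Γ] with banding parameter b ≥ 1 satisfies ‖B_b[Γ] − Γ‖∞ ≤ (2M/α) b^{−α}. -/
open scoped BigOperators

private lemma stmt4_step (α : ℝ) (hα : 0 < α) (k : ℕ) (hk : 2 ≤ k) :
    (k : ℝ) ^ (-(α + 1)) ≤ ((k - 1 : ℕ) : ℝ) ^ (-α) / α - (k : ℝ) ^ (-α) / α := by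
  have hk1 : (1 : ℝ) ≤ ((k - 1 : ℕ) : ℝ) := by exact_mod_cast Nat.one_le_iff_ne_zero.mpr (by omega)
  have hkk : ((k - 1 : ℕ) : ℝ) < (k : ℝ) := by exact_mod_cast Nat.sub_lt (by omega) one_pos
  set a : ℝ := ((k - 1 : ℕ) : ℝ) with ha'
  have ha : 0 < a := lt_of_lt_of_le one_pos hk1
  have hcont : ContinuousOn (fun x : ℝ => x ^ (-α)) (Set.Icc a (k : ℝ)) := by
    apply ContinuousOn.rpow_const continuousOn_id
    intro x hx
    exact Or.inl (ne_of_gt (lt_of_lt_of_le ha hx.1))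
  have hderiv : ∀ x ∈ Set.Ioo a (k : ℝ),
      HasDerivAt (fun x : ℝ => x ^ (-α)) (-α * x ^ (-α - 1)) x := by
    intro x hx
    exact Real.hasDerivAt_rpow_const (Or.inl (ne_of_gt (lt_trans ha hx.1)))
  obtain ⟨c, hc, hceq⟩ := exists_hasDerivAt_eq_slope (fun x : ℝ => x ^ (-α))
    (fun x => -α * x ^ (-α - 1)) hkk hcont hderiv
  have hc0 : 0 < c := lt_trans ha hc.1
  have hmono : (k : ℝ) ^ (-α - 1) ≤ c ^ (-α - 1) :=
    Real.rpow_le_rpow_of_nonpos hc0 hc.2.le (by linarith)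
  have hsub : (k : ℝ) - a = 1 := by
    rw [ha']
    have : (k : ℝ) = ((k - 1 : ℕ) : ℝ) + 1 := by
      have : k = (k - 1) + 1 := by omega
      exact_mod_cast this
    linarith
  rw [hsub, div_one] at hceq
  have key : a ^ (-α) - (k : ℝ) ^ (-α) = α * c ^ (-α - 1) := by linarith [hceq]
  have : α * (k : ℝ) ^ (-(α + 1)) ≤ a ^ (-α) - (k : ℝ) ^ (-α) := by
    rw [key]
    have : (-(α + 1)) = -α - 1 := by ring
    rw [this]
    exact mul_le_mul_of_nonneg_left hmono hα.le
  rw [div_sub_div_same, le_div_iff₀ hα]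
  linarith

private lemma stmt4_tele (α : ℝ) (hα : 0 < α) (b N : ℕ) (hb : 1 ≤ b) :
    ∑ k ∈ Finset.Ico (b + 1) N, (k : ℝ) ^ (-(α + 1)) ≤ (b : ℝ) ^ (-α) / α := by
  rw [Finset.sum_Ico_eq_sum_range]
  set G : ℕ → ℝ := fun i => ((b + i : ℕ) : ℝ) ^ (-α) / α with hG
  have hstep : ∀ i ∈ Finset.range (N - (b + 1)), ((b + 1 + i : ℕ) : ℝ) ^ (-(α + 1)) ≤ G i - G (i + 1) := by
    intro i _
    have h2 : 2 ≤ b + 1 + i := by omega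
    have := stmt4_step α hα (b + 1 + i) h2
    have e1 : (b + 1 + i) - 1 = b + i := by omega
    have e2 : b + (i + 1) = b + 1 + i := by omega
    rw [hG]
    simp only [e2]
    rw [e1] at this
    exact this
  calc ∑ i ∈ Finset.range (N - (b + 1)), ((b + 1 + i : ℕ) : ℝ) ^ (-(α + 1))
      ≤ ∑ i ∈ Finset.range (N - (b + 1)), (G i - G (i + 1)) := Finset.sum_le_sum hstep
    _ = G 0 - G (N - (b + 1)) := Finset.sum_range_sub' G (N - (b + 1))
    _ ≤ G 0 := by
        have : 0 ≤ G (N - (b + 1)) := by rw [hG]; positivity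
        linarith
    _ = (b : ℝ) ^ (-α) / α := by rw [hG]; norm_num

/-- Banding bias bound: under the decay condition, the banded matrix `B_b[Γ]`
satisfies `‖B_b[Γ] − Γ‖∞ ≤ (2M/α) b^{−α}` (max absolute row sum norm). -/
theorem stmt4 (p : ℕ) (Γ : Matrix (Fin p) (Fin p) ℝ) (M α : ℝ)
    (hM : 0 < M) (hα : 0 < α)
    (hdecay : ∀ i j : Fin p, |Γ i j| ≤ M / (1 + |((i : ℕ) : ℝ) - ((j : ℕ) : ℝ)| ^ (α + 1)))
    (b : ℕ) (hb : 1 ≤ b) :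
    ∀ i : Fin p,
      ∑ j : Fin p, |(if |((i : ℕ) : ℤ) - ((j : ℕ) : ℤ)| ≤ (b : ℤ) then Γ i j else 0) - Γ i j|
        ≤ (2 * M / α) * (b : ℝ) ^ (-α) := by
  intro i
  classical
  set d : Fin p → ℕ := fun j => (((i : ℕ) : ℤ) - ((j : ℕ) : ℤ)).natAbs with hd
  set g : ℕ → ℝ := fun k => if k ≤ b then 0 else M * (k : ℝ) ^ (-(α + 1)) with hg
  have hgnonneg : ∀ k, 0 ≤ g k := by
    intro k
    rw [hg]; dsimp only
    split
    · exact le_refl 0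
    · positivity
  -- termwise bound
  have hterm : ∀ j : Fin p,
      |(if |((i : ℕ) : ℤ) - ((j : ℕ) : ℤ)| ≤ (b : ℤ) then Γ i j else 0) - Γ i j| ≤ g (d j) := by
    intro j
    have hdj : (|((i : ℕ) : ℤ) - ((j : ℕ) : ℤ)| ≤ (b : ℤ)) ↔ d j ≤ b := by
      rw [hd]; dsimp only
      rw [Int.abs_eq_natAbs]
      exact_mod_cast Iff.rfl
    by_cases h : d j ≤ b
    · rw [if_pos (hdj.mpr h), hg]
      simp [h]
    · rw [if_neg (fun hc => h (hdj.mp hc)), hg]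
      dsimp only
      rw [if_neg h]
      rw [zero_sub, abs_neg]
      have habs : |((i : ℕ) : ℝ) - ((j : ℕ) : ℝ)| = ((d j : ℕ) : ℝ) := by
        rw [hd]; dsimp only
        rw [Nat.cast_natAbs]
        push_cast
        ring_nf
      have hd1 : (1 : ℝ) ≤ ((d j : ℕ) : ℝ) := by
        have : 1 ≤ d j := by omega
        exact_mod_cast this
      have hpow : (0:ℝ) < ((d j : ℕ) : ℝ) ^ (α + 1) := by positivity
      calc |Γ i j| ≤ M / (1 + |((i : ℕ) : ℝ) - ((j : ℕ) : ℝ)| ^ (α + 1)) := hdecay i j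
        _ ≤ M / (((d j : ℕ) : ℝ) ^ (α + 1)) := by
            rw [habs]
            apply div_le_div_of_nonneg_left hM.le hpow
            linarith
        _ = M * ((d j : ℕ) : ℝ) ^ (-(α + 1)) := by
            rw [Real.rpow_neg (by linarith), div_eq_mul_inv]
  have hsum1 : ∑ j : Fin p, |(if |((i : ℕ) : ℤ) - ((j : ℕ) : ℤ)| ≤ (b : ℤ) then Γ i j else 0) - Γ i j|
      ≤ ∑ j : Fin p, g (d j) := Finset.sum_le_sum (fun j _ => hterm j)
  -- fiber count
  have hcard : ∀ k, (Finset.univ.filter fun j : Fin p => d j = k).card ≤ 2 := by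
    intro k
    have h2 : (Finset.univ : Finset Bool).card = 2 := by simp
    rw [← h2]
    apply Finset.card_le_card_of_injOn
      (f := fun j : Fin p => decide ((j : ℕ) < (i : ℕ))) (fun _ _ => Finset.mem_univ _)
    intro j₁ h₁ j₂ h₂ hbe
    simp only [Finset.mem_coe, Finset.mem_filter, hd] at h₁ h₂
    have hb' : ((j₁ : ℕ) < (i : ℕ)) ↔ ((j₂ : ℕ) < (i : ℕ)) := by
      simpa [decide_eq_decide] using hbe
    have e₁ := h₁.2
    have e₂ := h₂.2
    apply Fin.ext
    omega
  have hsum2 : ∑ j : Fin p, g (d j)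
      = ∑ k ∈ Finset.univ.image d, (Finset.univ.filter fun j : Fin p => d j = k).card • g k :=
    Finset.sum_comp g d
  have hsum3 : ∑ k ∈ Finset.univ.image d, (Finset.univ.filter fun j : Fin p => d j = k).card • g k
      ≤ ∑ k ∈ Finset.univ.image d, 2 * g k := by
    apply Finset.sum_le_sum
    intro k _
    rw [nsmul_eq_mul]
    exact mul_le_mul_of_nonneg_right (by exact_mod_cast hcard k) (hgnonneg k)
  -- restrict to k > b, inside Ico (b+1) (b+p+1)
  have hzero : ∀ k ∈ Finset.univ.image d, g k ≠ 0 → b < k := by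
    intro k _ hgk
    by_contra h
    push_neg at h
    rw [hg] at hgk
    simp [h] at hgk
  have hsubset : (Finset.univ.image d).filter (fun k => b < k) ⊆ Finset.Ico (b + 1) (b + p + 1) := by
    intro k hk
    simp only [Finset.mem_filter, Finset.mem_image, Finset.mem_univ, true_and] at hk
    obtain ⟨⟨j, hj⟩, hbk⟩ := hk
    rw [Finset.mem_Ico]
    have hi := i.is_lt
    have hjl := j.is_lt
    rw [hd] at hj
    dsimp only at hj
    omega
  have hsum4 : ∑ k ∈ Finset.univ.image d, g k ≤ ∑ k ∈ Finset.Ico (b + 1) (b + p + 1), g k := by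
    rw [← Finset.sum_filter_of_ne hzero]
    exact Finset.sum_le_sum_of_subset_of_nonneg hsubset (fun k _ _ => hgnonneg k)
  have hsum5 : ∑ k ∈ Finset.Ico (b + 1) (b + p + 1), g k
      ≤ M * ((b : ℝ) ^ (-α) / α) := by
    have : ∑ k ∈ Finset.Ico (b + 1) (b + p + 1), g k
        = M * ∑ k ∈ Finset.Ico (b + 1) (b + p + 1), (k : ℝ) ^ (-(α + 1)) := by
      rw [Finset.mul_sum]
      apply Finset.sum_congr rfl
      intro k hk
      rw [Finset.mem_Ico] at hk
      rw [hg]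
      dsimp only
      rw [if_neg (by omega)]
    rw [this]
    exact mul_le_mul_of_nonneg_left (stmt4_tele α hα b (b + p + 1) hb) hM.le
  have hfinal : (2 : ℝ) * (M * ((b : ℝ) ^ (-α) / α)) = (2 * M / α) * (b : ℝ) ^ (-α) := by
    field_simp
  calc ∑ j : Fin p, |(if |((i : ℕ) : ℤ) - ((j : ℕ) : ℤ)| ≤ (b : ℤ) then Γ i j else 0) - Γ i j|
      ≤ ∑ j : Fin p, g (d j) := hsum1
    _ = ∑ k ∈ Finset.univ.image d, (Finset.univ.filter fun j : Fin p => d j = k).card • g k := hsum2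
    _ ≤ ∑ k ∈ Finset.univ.image d, 2 * g k := hsum3
    _ = 2 * ∑ k ∈ Finset.univ.image d, g k := by rw [Finset.mul_sum]
    _ ≤ 2 * ∑ k ∈ Finset.Ico (b + 1) (b + p + 1), g k := by linarith [hsum4]
    _ ≤ 2 * (M * ((b : ℝ) ^ (-α) / α)) := by linarith [hsum5]
    _ = (2 * M / α) * (b : ℝ) ^ (-α) := hfinal
end

section
/- Let A and Γ be p×p matrices and t > 0. Define the thresholded matrix T_t[A] with entries A_{ij}·1(|A_{ij}| ≥ t), and similarly T_t[Γ]. Then ‖T_t[A] − T_t[Γ]‖∞ ≤ max_{i,j}|A_{ij} − Γ_{ij}| · max_i ∑_j 1(|Γ_{ij}| ≥ t) + max_i ∑_j |Γ_{ij}| 1(|Γ_{ij}| < t) + max_{i,j}|A_{ij} − Γ_{ij}| · max_i ∑_j 1(|A_{ij}| ≥ t, |Γ_{ij}| < t) + t · max_i ∑_j 1(|Γ_{ij}| ≥ t). -/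
open scoped BigOperators

lemma stmt8_key (a g t E : ℝ) (ht : 0 < t) (he : |a - g| ≤ E) :
    |(if t ≤ |a| then a else 0) - (if t ≤ |g| then g else 0)| ≤
      (if t ≤ |g| then E else 0) + (if |g| < t then |g| else 0) +
      (if t ≤ |a| ∧ |g| < t then E else 0) + (if t ≤ |g| then t else 0) := by
  have h1 : |a| ≤ |a - g| + |g| := by
    have := abs_add_le (a - g) g; simpa using this
  have h2 : |g| ≤ |a - g| + |a| := by
    have := abs_add_le (a - g) (-a); rw [abs_neg] at this
    have e : a - g + -a = -g := by ring
    rw [e, abs_neg] at this; linarith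
  have h3 : 0 ≤ |g| := abs_nonneg g
  split_ifs with ha hg hg <;> simp_all <;> try linarith

/-- The four-term decomposition bound for the max row-sum norm of the difference
of two hard-thresholded matrices, stated with arbitrary upper bounds `E` for the
entrywise difference, `N₁` for the row counts of large `Γ` entries, `S` for row
sums of small `Γ` entries, and `N₂` for the row counts of entries large in `A`
but small in `Γ`. -/
theorem stmt8 (p : ℕ) (A Γ : Matrix (Fin p) (Fin p) ℝ) (t : ℝ) (ht : 0 < t)
    (E N₁ S N₂ : ℝ)
    (hE : ∀ i j : Fin p, |A i j - Γ i j| ≤ E)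
    (hN₁ : ∀ i : Fin p, (∑ j : Fin p, if t ≤ |Γ i j| then (1 : ℝ) else 0) ≤ N₁)
    (hS : ∀ i : Fin p, (∑ j : Fin p, if |Γ i j| < t then |Γ i j| else 0) ≤ S)
    (hN₂ : ∀ i : Fin p,
      (∑ j : Fin p, if t ≤ |A i j| ∧ |Γ i j| < t then (1 : ℝ) else 0) ≤ N₂) :
    ∀ i : Fin p,
      ∑ j : Fin p,
        |(if t ≤ |A i j| then A i j else 0) - (if t ≤ |Γ i j| then Γ i j else 0)|
        ≤ E * N₁ + S + E * N₂ + t * N₁ := by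
  intro i
  have hE0 : 0 ≤ E := le_trans (abs_nonneg _) (hE i i)
  calc ∑ j : Fin p,
        |(if t ≤ |A i j| then A i j else 0) - (if t ≤ |Γ i j| then Γ i j else 0)|
      ≤ ∑ j : Fin p, ((if t ≤ |Γ i j| then E else 0) +
          (if |Γ i j| < t then |Γ i j| else 0) +
          (if t ≤ |A i j| ∧ |Γ i j| < t then E else 0) +
          (if t ≤ |Γ i j| then t else 0)) := by
        apply Finset.sum_le_sum
        intro j _
        exact stmt8_key (A i j) (Γ i j) t E ht (hE i j)
    _ = E * (∑ j : Fin p, if t ≤ |Γ i j| then (1 : ℝ) else 0) +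
        (∑ j : Fin p, if |Γ i j| < t then |Γ i j| else 0) +
        E * (∑ j : Fin p, if t ≤ |A i j| ∧ |Γ i j| < t then (1 : ℝ) else 0) +
        t * (∑ j : Fin p, if t ≤ |Γ i j| then (1 : ℝ) else 0) := by
        simp only [Finset.sum_add_distrib, Finset.mul_sum, mul_ite, mul_one, mul_zero]
    _ ≤ E * N₁ + S + E * N₂ + t * N₁ := by
        gcongr <;> [exact hN₁ i; exact hS i; exact hN₂ i; exact hN₁ i]
end
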